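/- Let A = (M₁+φ) − (N₁+φ) be an H-splitting of an H₊-matrix A ∈ ℝ^{n×n} (i.e. ⟨M₁+φ⟩ − |N₁+φ| is a nonsingular M-matrix), with φ diagonal and φ₁, φ₂ positive diagonal, G ≥ 0 a matrix, and D_{φ₁} = φ₁·diag(A). Let U be a positive diagonal matrix such that (⟨M₁+φ⟩ − |N₁+φ|)U is strictly diagonally dominant, and let e = (1,…,1)ᵀ. If 0 < φ₂ < D_{φ₁} and (φ₂ − D_{φ₁} + ⟨M_{φ₁}+φ_{φ₁}⟩ − |N_{φ₁}+φ_{φ₁}| − φ₂G)Ue > 0, then ρ(L̄) < 1 for L̄ = (⟨M_{φ₁}⟩ + |φ_{φ₁}| + φ₂)⁻¹(|N_{φ₁}+φ_{φ₁}| + |A_{φ₁}−φ₂| + 2φ₂G), so Method 3.1 is convergent. -/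

import Mathlib

open Matrix Finset
open scoped ENNReal NNReal

noncomputable def specRad {n : ℕ} (A : Matrix (Fin n) (Fin n) ℝ) : ℝ :=
  (spectralRadius ℂ (A.map (algebraMap ℝ ℂ))).toReal

def matAbs {n : ℕ} (A : Matrix (Fin n) (Fin n) ℝ) : Matrix (Fin n) (Fin n) ℝ :=
  fun i j => |A i j|

def vecAbs {n : ℕ} (x : Fin n → ℝ) : Fin n → ℝ := fun i => |x i|

def cmpMat {n : ℕ} (A : Matrix (Fin n) (Fin n) ℝ) : Matrix (Fin n) (Fin n) ℝ :=
  fun i j => if i = j then |A i j| else -|A i j|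

def PosDiag {n : ℕ} (Φ : Matrix (Fin n) (Fin n) ℝ) : Prop :=
  Φ.IsDiag ∧ ∀ i, 0 < Φ i i

def ZMat {n : ℕ} (A : Matrix (Fin n) (Fin n) ℝ) : Prop :=
  ∀ i j, i ≠ j → A i j ≤ 0

def NonsingularMMatrix {n : ℕ} (A : Matrix (Fin n) (Fin n) ℝ) : Prop :=
  ZMat A ∧ IsUnit A.det ∧ ∀ i j, 0 ≤ A⁻¹ i j

def SDD {n : ℕ} (A : Matrix (Fin n) (Fin n) ℝ) : Prop :=
  ∀ i, ∑ j ∈ Finset.univ.erase i, |A i j| < |A i i|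

def ICPsol {n : ℕ} (A : Matrix (Fin n) (Fin n) ℝ) (q : Fin n → ℝ)
    (ψ : (Fin n → ℝ) → (Fin n → ℝ)) (z : Fin n → ℝ) : Prop :=
  (∀ i, 0 ≤ (A *ᵥ z + q) i) ∧ (∀ i, 0 ≤ (z - ψ z) i) ∧ (A *ᵥ z + q) ⬝ᵥ (z - ψ z) = 0

def HplusMatrix {n : ℕ} (A : Matrix (Fin n) (Fin n) ℝ) : Prop :=
  NonsingularMMatrix (cmpMat A) ∧ ∀ i, 0 < A i i

section Helpers

variable {n : ℕ}

lemma vecAbs_apply (x : Fin n → ℝ) (i : Fin n) : vecAbs x i = |x i| := rfl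

lemma diag_mul_apply {D M : Matrix (Fin n) (Fin n) ℝ} (hD : D.IsDiag) (i j : Fin n) :
    (D * M) i j = D i i * M i j := by
  rw [Matrix.mul_apply]
  rw [Finset.sum_eq_single i]
  · intro b _ hb; rw [hD (Ne.symm hb), zero_mul]
  · intro h; exact absurd (mem_univ i) h

lemma diag_mulVec_apply {D : Matrix (Fin n) (Fin n) ℝ} (hD : D.IsDiag) (v : Fin n → ℝ) (i : Fin n) :
    (D *ᵥ v) i = D i i * v i := by
  rw [Matrix.mulVec, dotProduct]
  rw [Finset.sum_eq_single i]
  · intro b _ hb; rw [hD (Ne.symm hb), zero_mul]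
  · intro h; exact absurd (mem_univ i) h

lemma abs_mulVec_le {M : Matrix (Fin n) (Fin n) ℝ} (v : Fin n → ℝ) (i : Fin n) :
    |(M *ᵥ v) i| ≤ (matAbs M *ᵥ vecAbs v) i := by
  simp only [Matrix.mulVec, dotProduct, matAbs, vecAbs]
  calc |∑ j, M i j * v j| ≤ ∑ j, |M i j * v j| :=
        Finset.abs_sum_le_sum_abs (fun j => M i j * v j) Finset.univ
  _ = ∑ j, |M i j| * |v j| := by simp [abs_mul]

lemma mulVec_mono {P : Matrix (Fin n) (Fin n) ℝ} (hP : ∀ i j, 0 ≤ P i j)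
    {a b : Fin n → ℝ} (hab : ∀ i, a i ≤ b i) (i : Fin n) :
    (P *ᵥ a) i ≤ (P *ᵥ b) i := by
  simp only [Matrix.mulVec, dotProduct]
  exact Finset.sum_le_sum fun j _ => mul_le_mul_of_nonneg_left (hab j) (hP i j)

lemma mulVec_nonneg {P : Matrix (Fin n) (Fin n) ℝ} (hP : ∀ i j, 0 ≤ P i j)
    {a : Fin n → ℝ} (ha : ∀ i, 0 ≤ a i) (i : Fin n) : 0 ≤ (P *ᵥ a) i := by
  simp only [Matrix.mulVec, dotProduct]
  exact Finset.sum_nonneg fun j _ => mul_nonneg (hP i j) (ha j)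

lemma zmat_sol_nonneg {M : Matrix (Fin n) (Fin n) ℝ} {u : Fin n → ℝ}
    (hZ : ∀ i j, i ≠ j → M i j ≤ 0) (hu : ∀ i, 0 < u i)
    (hMu : ∀ i, 0 < (M *ᵥ u) i) {x : Fin n → ℝ}
    (hx : ∀ i, 0 ≤ (M *ᵥ x) i) : ∀ i, 0 ≤ x i := by
  by_contra hc
  push_neg at hc
  obtain ⟨k, hk⟩ := hc
  have hne : (Finset.univ : Finset (Fin n)).Nonempty := ⟨k, mem_univ k⟩
  obtain ⟨i, -, hi⟩ := Finset.exists_max_image Finset.univ (fun j => -x j / u j) hne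
  set t := -x i / u i with ht
  have htpos : 0 < t :=
    lt_of_lt_of_le (div_pos (neg_pos.2 hk) (hu k)) (hi k (mem_univ k))
  have hxj : ∀ j, -(t * u j) ≤ x j := by
    intro j
    have h2 := hi j (mem_univ j)
    rw [div_le_div_iff₀ (hu j) (hu i)] at h2
    have hui := hu i
    rw [ht, div_mul_eq_mul_div, neg_le, le_div_iff₀ hui]
    nlinarith
  have hxi : x i = -(t * u i) := by
    rw [ht, div_mul_cancel₀ _ (hu i).ne']; ring
  have hsum : (M *ᵥ x) i ≤ -(t * (M *ᵥ u) i) := by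
    simp only [Matrix.mulVec, dotProduct]
    calc ∑ j, M i j * x j ≤ ∑ j, -(t * (M i j * u j)) := by
          refine Finset.sum_le_sum fun j _ => ?_
          rcases eq_or_ne j i with rfl | hji
          · rw [hxi]; ring_nf; exact le_refl _
          · have h3 := mul_le_mul_of_nonpos_left (hxj j) (hZ i j (Ne.symm hji))
            calc M i j * x j ≤ M i j * -(t * u j) := h3
            _ = -(t * (M i j * u j)) := by ring
    _ = -(t * ∑ j, M i j * u j) := by rw [Finset.mul_sum]; simp
  have h4 := hx i
  nlinarith [hMu i]

lemma zmat_det_isUnit {M : Matrix (Fin n) (Fin n) ℝ} {u : Fin n → ℝ}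
    (hZ : ∀ i j, i ≠ j → M i j ≤ 0) (hu : ∀ i, 0 < u i)
    (hMu : ∀ i, 0 < (M *ᵥ u) i) : IsUnit M.det := by
  rw [isUnit_iff_ne_zero]
  intro hdet
  obtain ⟨v, hv0, hv⟩ := (Matrix.exists_mulVec_eq_zero_iff).2 hdet
  have h1 : ∀ i, 0 ≤ v i := by
    refine zmat_sol_nonneg hZ hu hMu fun i => ?_
    rw [hv]; exact le_refl _
  have h2 : ∀ i, 0 ≤ (-v) i := by
    refine zmat_sol_nonneg hZ hu hMu (x := -v) fun i => ?_
    rw [Matrix.mulVec_neg, hv, neg_zero]; exact le_refl _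
  refine hv0 (funext fun i => ?_)
  have h3 : v i ≤ 0 := by have := h2 i; simp only [Pi.neg_apply, neg_nonneg] at this; exact this
  exact le_antisymm h3 (h1 i)

lemma zmat_inv_nonneg {M : Matrix (Fin n) (Fin n) ℝ} {u : Fin n → ℝ}
    (hZ : ∀ i j, i ≠ j → M i j ≤ 0) (hu : ∀ i, 0 < u i)
    (hMu : ∀ i, 0 < (M *ᵥ u) i) : ∀ i j, 0 ≤ M⁻¹ i j := by
  intro i k
  have hdet := zmat_det_isUnit hZ hu hMu
  have hMM : M * M⁻¹ = 1 := Matrix.mul_nonsing_inv M hdet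
  refine zmat_sol_nonneg hZ hu hMu (x := fun j => M⁻¹ j k) (fun l => ?_) i
  have : (M *ᵥ fun j => M⁻¹ j k) l = (M * M⁻¹) l k := by
    simp [Matrix.mulVec, dotProduct, Matrix.mul_apply]
  rw [this, hMM]
  by_cases h : l = k <;> simp [Matrix.one_apply, h]

lemma zmat_inv_mulVec_pos {M : Matrix (Fin n) (Fin n) ℝ} {u : Fin n → ℝ}
    (hZ : ∀ i j, i ≠ j → M i j ≤ 0) (hu : ∀ i, 0 < u i)
    (hMu : ∀ i, 0 < (M *ᵥ u) i) {v : Fin n → ℝ} (hv : ∀ i, 0 < v i) :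
    ∀ i, 0 < (M⁻¹ *ᵥ v) i := by
  intro i
  have hdet := zmat_det_isUnit hZ hu hMu
  set y := M⁻¹ *ᵥ v with hy
  have hMy : M *ᵥ y = v := by
    rw [hy, Matrix.mulVec_mulVec, Matrix.mul_nonsing_inv M hdet, Matrix.one_mulVec]
  have hynn : ∀ j, 0 ≤ y j :=
    zmat_sol_nonneg hZ hu hMu (fun j => by rw [hMy]; exact (hv j).le)
  have hle : (M *ᵥ y) i ≤ M i i * y i := by
    simp only [Matrix.mulVec, dotProduct]
    rw [← Finset.sum_erase_add _ _ (mem_univ i)]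
    have : ∑ j ∈ univ.erase i, M i j * y j ≤ 0 :=
      Finset.sum_nonpos fun j hj =>
        mul_nonpos_of_nonpos_of_nonneg (hZ i j (Ne.symm (Finset.ne_of_mem_erase hj))) (hynn j)
    linarith
  have hvy : 0 < (M *ᵥ y) i := by rw [hMy]; exact hv i
  have hpos : 0 < M i i * y i := lt_of_lt_of_le hvy hle
  rcases (hynn i).lt_or_eq with h | h
  · exact h
  · exfalso; rw [← h, mul_zero] at hpos; exact lt_irrefl _ hpos

lemma hmat_det_isUnit {B : Matrix (Fin n) (Fin n) ℝ} {u : Fin n → ℝ}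
    (hu : ∀ i, 0 < u i) (hBu : ∀ i, 0 < (cmpMat B *ᵥ u) i) : IsUnit B.det := by
  rw [isUnit_iff_ne_zero]
  intro hdet
  obtain ⟨v, hv0, hv⟩ := (Matrix.exists_mulVec_eq_zero_iff).2 hdet
  rcases Nat.eq_zero_or_pos n with rfl | hn
  · exact hv0 (funext fun i => Fin.elim0 i)
  have hne : (Finset.univ : Finset (Fin n)).Nonempty := ⟨⟨0, hn⟩, mem_univ _⟩
  obtain ⟨i, -, hi⟩ := Finset.exists_max_image Finset.univ (fun j => |v j| / u j) hne
  set t := |v i| / u i with ht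
  have hvk : ∃ k, v k ≠ 0 := by
    by_contra hc; push_neg at hc; exact hv0 (funext fun k => hc k)
  obtain ⟨k, hk⟩ := hvk
  have htpos : 0 < t :=
    lt_of_lt_of_le (div_pos (abs_pos.2 hk) (hu k)) (hi k (mem_univ k))
  have hvj : ∀ j, |v j| ≤ t * u j := by
    intro j
    have h2 := hi j (mem_univ j)
    rw [div_le_iff₀ (hu j)] at h2; linarith
  have hvi : |v i| = t * u i := by rw [ht, div_mul_cancel₀ _ (hu i).ne']
  have hrow : (B *ᵥ v) i = 0 := by rw [hv]; rfl
  have hsplit : B i i * v i + ∑ j ∈ univ.erase i, B i j * v j = 0 := by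
    rw [← hrow]; simp only [Matrix.mulVec, dotProduct]
    rw [← Finset.sum_erase_add _ _ (mem_univ i)]; ring
  have h5 : |B i i| * |v i| ≤ ∑ j ∈ univ.erase i, |B i j| * (t * u j) := by
    have : B i i * v i = -∑ j ∈ univ.erase i, B i j * v j := by linarith
    calc |B i i| * |v i| = |B i i * v i| := (abs_mul _ _).symm
    _ = |∑ j ∈ univ.erase i, B i j * v j| := by rw [this, abs_neg]
    _ ≤ ∑ j ∈ univ.erase i, |B i j * v j| := Finset.abs_sum_le_sum_abs _ _
    _ ≤ ∑ j ∈ univ.erase i, |B i j| * (t * u j) := by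
        refine Finset.sum_le_sum fun j hj => ?_
        rw [abs_mul]
        exact mul_le_mul_of_nonneg_left (hvj j) (abs_nonneg _)
  have hcmp : (cmpMat B *ᵥ u) i = |B i i| * u i - ∑ j ∈ univ.erase i, |B i j| * u j := by
    simp only [Matrix.mulVec, dotProduct, cmpMat]
    rw [← Finset.sum_erase_add _ _ (mem_univ i)]
    rw [if_pos rfl]
    have : ∑ j ∈ univ.erase i, (if i = j then |B i j| else -|B i j|) * u j
        = -∑ j ∈ univ.erase i, |B i j| * u j := by
      rw [← Finset.sum_neg_distrib]
      refine Finset.sum_congr rfl fun j hj => ?_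
      rw [if_neg (Finset.ne_of_mem_erase hj).symm]; ring
    rw [this]; ring
  have h6 : ∑ j ∈ univ.erase i, |B i j| * (t * u j) = t * ∑ j ∈ univ.erase i, |B i j| * u j := by
    rw [Finset.mul_sum]; refine Finset.sum_congr rfl fun j _ => by ring
  have h7 := hBu i
  rw [hcmp] at h7
  rw [hvi, h6] at h5
  nlinarith

lemma cmpMat_mulVec_abs_le {B : Matrix (Fin n) (Fin n) ℝ} (y : Fin n → ℝ) (i : Fin n) :
    (cmpMat B *ᵥ vecAbs y) i ≤ |(B *ᵥ y) i| := by
  have hcmp : (cmpMat B *ᵥ vecAbs y) i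
      = |B i i| * |y i| - ∑ j ∈ univ.erase i, |B i j| * |y j| := by
    simp only [Matrix.mulVec, dotProduct, cmpMat, vecAbs]
    rw [← Finset.sum_erase_add _ _ (mem_univ i), if_pos rfl]
    have : ∑ j ∈ univ.erase i, (if i = j then |B i j| else -|B i j|) * |y j|
        = -∑ j ∈ univ.erase i, |B i j| * |y j| := by
      rw [← Finset.sum_neg_distrib]
      refine Finset.sum_congr rfl fun j hj => ?_
      rw [if_neg (Finset.ne_of_mem_erase hj).symm]; ring
    rw [this]; ring
  have hrow : (B *ᵥ y) i = B i i * y i + ∑ j ∈ univ.erase i, B i j * y j := by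
    simp only [Matrix.mulVec, dotProduct]
    rw [← Finset.sum_erase_add _ _ (mem_univ i)]; ring
  rw [hcmp, hrow]
  have h1 : |∑ j ∈ univ.erase i, B i j * y j| ≤ ∑ j ∈ univ.erase i, |B i j| * |y j| := by
    calc |∑ j ∈ univ.erase i, B i j * y j| ≤ ∑ j ∈ univ.erase i, |B i j * y j| :=
          Finset.abs_sum_le_sum_abs _ _
    _ = ∑ j ∈ univ.erase i, |B i j| * |y j| := by
        refine Finset.sum_congr rfl fun j _ => abs_mul _ _
  have h2 : |B i i * y i| - |∑ j ∈ univ.erase i, B i j * y j|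
      ≤ |B i i * y i + ∑ j ∈ univ.erase i, B i j * y j| := by
    have h3 := abs_sub_abs_le_abs_sub (B i i * y i) (-∑ j ∈ univ.erase i, B i j * y j)
    rw [abs_neg, sub_neg_eq_add] at h3
    exact h3
  rw [abs_mul] at h2
  linarith

lemma specRad_lt_one {C : Matrix (Fin n) (Fin n) ℝ} {u : Fin n → ℝ}
    (hC : ∀ i j, 0 ≤ C i j) (hu : ∀ i, 0 < u i)
    (hCu : ∀ i, (C *ᵥ u) i < u i) : specRad C < 1 := by
  rcases Nat.eq_zero_or_pos n with rfl | hn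
  · have hspec : spectrum ℂ (C.map (algebraMap ℝ ℂ)) = ∅ := by
      ext k
      simp only [Set.mem_empty_iff_false, iff_false, spectrum.mem_iff, not_not]
      rw [Matrix.isUnit_iff_isUnit_det, Matrix.det_fin_zero]
      exact isUnit_one
    rw [specRad, spectralRadius, hspec]
    simp
  have hne : (Finset.univ : Finset (Fin n)).Nonempty := ⟨⟨0, hn⟩, mem_univ _⟩
  set r : ℝ := Finset.univ.sup' hne (fun i => (C *ᵥ u) i / u i) with hr
  have hr1 : r < 1 := by
    rw [hr, Finset.sup'_lt_iff]
    intro i _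
    rw [div_lt_one (hu i)]
    exact hCu i
  have hr0 : 0 ≤ r := by
    refine le_trans ?_ (Finset.le_sup' (f := fun i => (C *ᵥ u) i / u i) (b := ⟨0, hn⟩) (mem_univ _))
    have : 0 ≤ (C *ᵥ u) ⟨0, hn⟩ := by
      simp only [Matrix.mulVec, dotProduct]
      exact Finset.sum_nonneg fun j _ => mul_nonneg (hC _ j) (hu j).le
    exact div_nonneg this (hu _).le
  have key : ∀ k ∈ spectrum ℂ (C.map (algebraMap ℝ ℂ)), ‖k‖ ≤ r := by
    intro k hk
    rw [spectrum.mem_iff] at hk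
    rw [Matrix.isUnit_iff_isUnit_det, isUnit_iff_ne_zero, not_not] at hk
    obtain ⟨v, hv0, hv⟩ := (Matrix.exists_mulVec_eq_zero_iff).2 hk
    have hMv : ∀ i, (C.map (algebraMap ℝ ℂ) *ᵥ v) i = k * v i := by
      intro i
      have h1 := congrFun hv i
      simp only [Matrix.sub_mulVec, Pi.sub_apply, Pi.zero_apply, sub_eq_zero] at h1
      rw [← h1]
      have : (algebraMap ℂ (Matrix (Fin n) (Fin n) ℂ)) k = Matrix.diagonal (fun _ => k) := by
        rw [Matrix.algebraMap_eq_diagonal]; rfl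
      rw [this, Matrix.mulVec_diagonal]
    obtain ⟨i, -, hi⟩ := Finset.exists_max_image Finset.univ (fun j => ‖v j‖ / u j) hne
    set t := ‖v i‖ / u i with ht
    have hvk : ∃ l, v l ≠ 0 := by
      by_contra hc; push_neg at hc; exact hv0 (funext fun l => hc l)
    obtain ⟨l, hl⟩ := hvk
    have htpos : 0 < t :=
      lt_of_lt_of_le (div_pos (norm_pos_iff.2 hl) (hu l)) (hi l (mem_univ l))
    have hvj : ∀ j, ‖v j‖ ≤ t * u j := by
      intro j
      have h2 := hi j (mem_univ j)
      rw [div_le_iff₀ (hu j)] at h2; linarith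
    have hvi : ‖v i‖ = t * u i := by rw [ht, div_mul_cancel₀ _ (hu i).ne']
    have hCui : (C *ᵥ u) i ≤ r * u i := by
      have := Finset.le_sup' (f := fun j => (C *ᵥ u) j / u j) (b := i) (mem_univ i)
      rw [div_le_iff₀ (hu i)] at this
      linarith [this]
    have hbound : ‖k‖ * ‖v i‖ ≤ t * (C *ᵥ u) i := by
      calc ‖k‖ * ‖v i‖ = ‖k * v i‖ := (norm_mul _ _).symm
      _ = ‖(C.map (algebraMap ℝ ℂ) *ᵥ v) i‖ := by rw [hMv i]
      _ = ‖∑ j, (algebraMap ℝ ℂ) (C i j) * v j‖ := by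
          simp [Matrix.mulVec, dotProduct, Matrix.map_apply]
      _ ≤ ∑ j, ‖(algebraMap ℝ ℂ) (C i j) * v j‖ := norm_sum_le _ _
      _ = ∑ j, C i j * ‖v j‖ := by
          refine Finset.sum_congr rfl fun j _ => ?_
          rw [norm_mul, norm_algebraMap', Real.norm_eq_abs, abs_of_nonneg (hC i j)]
      _ ≤ ∑ j, C i j * (t * u j) := by
          refine Finset.sum_le_sum fun j _ => mul_le_mul_of_nonneg_left (hvj j) (hC i j)
      _ = t * (C *ᵥ u) i := by
          simp only [Matrix.mulVec, dotProduct, Finset.mul_sum]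
          refine Finset.sum_congr rfl fun j _ => by ring
    rw [hvi] at hbound
    have h9 : t * (C *ᵥ u) i ≤ t * (r * u i) := mul_le_mul_of_nonneg_left hCui htpos.le
    have h10 : ‖k‖ * (t * u i) ≤ t * (r * u i) := le_trans hbound h9
    have hui := hu i
    nlinarith [mul_pos htpos hui]
  have hsr : spectralRadius ℂ (C.map (algebraMap ℝ ℂ)) ≤ (Real.toNNReal r : ℝ≥0∞) := by
    rw [spectralRadius]
    refine iSup₂_le fun k hk => ?_
    rw [ENNReal.coe_le_coe, ← norm_toNNReal]
    exact Real.toNNReal_mono (key k hk)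
  have h11 := ENNReal.toReal_mono ENNReal.coe_ne_top hsr
  rw [ENNReal.coe_toReal, Real.coe_toNNReal r hr0] at h11
  exact lt_of_le_of_lt h11 hr1

lemma mmatrix_diag_pos {S : Matrix (Fin n) (Fin n) ℝ}
    (hM : NonsingularMMatrix S) (i : Fin n) : 0 < S i i := by
  obtain ⟨hZ, hdet, hinv⟩ := hM
  have h1 : (S * S⁻¹) i i = 1 := by rw [Matrix.mul_nonsing_inv _ hdet, Matrix.one_apply_eq]
  rw [Matrix.mul_apply] at h1
  have h2 : ∑ j ∈ univ.erase i, S i j * S⁻¹ j i ≤ 0 :=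
    Finset.sum_nonpos fun j hj =>
      mul_nonpos_of_nonpos_of_nonneg (hZ i j (Ne.symm (Finset.ne_of_mem_erase hj))) (hinv j i)
  have h3 : (1:ℝ) ≤ S i i * S⁻¹ i i := by
    rw [← Finset.sum_erase_add _ _ (mem_univ i)] at h1; linarith
  by_contra hc
  push_neg at hc
  nlinarith [hinv i i]

lemma twoY_le {Y P Q : Matrix (Fin n) (Fin n) ℝ} {u : Fin n → ℝ} (hu : ∀ j, 0 ≤ u j)
    (h : ∀ i j, 2 * Y i j ≤ P i j - Q i j) (i : Fin n) :
    2 * (Y *ᵥ u) i ≤ (P *ᵥ u) i - (Q *ᵥ u) i := by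
  simp only [Matrix.mulVec, dotProduct, Finset.mul_sum, ← Finset.sum_sub_distrib]
  refine Finset.sum_le_sum fun j _ => ?_
  have h2 := mul_le_mul_of_nonneg_right (h i j) (hu j)
  rw [sub_mul] at h2
  linarith

lemma scal_off (p m nu a w2g : ℝ) (hp : 0 ≤ p) (hw : 0 ≤ w2g) (ha : a = m - nu) :
    2 * (-(p * |m|) - p * |nu| - w2g) ≤ -(p * |m|) - (p * |nu| + p * |a| + 2 * w2g) := by
  have h : |a| ≤ |m| + |nu| := by
    rw [ha, sub_eq_add_neg]
    exact (abs_add_le _ _).trans (by rw [abs_neg])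
  nlinarith [mul_le_mul_of_nonneg_left h hp]

lemma scal_diag1 (p m f nu w2 g a : ℝ) (hp : 0 < p) (ha : 0 < a)
    (haeq : a = (m + f) - (nu + f)) (hw2a : w2 < p * a) :
    2 * (w2 - p * a + p * |m + f| - p * |nu + f| - w2 * g)
      ≤ (p * |m| + p * |f| + w2) - (p * |nu + f| + |p * a - w2| + 2 * (w2 * g)) := by
  have h1 : |p * a - w2| = p * a - w2 := abs_of_pos (by linarith)
  have h2 : |m + f| ≤ |m| + |f| := abs_add_le m f
  have h3 : |m + f| ≤ a + |nu + f| := by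
    have : m + f = a + (nu + f) := by rw [haeq]; ring
    rw [this]
    exact (abs_add_le _ _).trans (by rw [abs_of_pos ha])
  rw [h1]
  nlinarith [mul_le_mul_of_nonneg_left h2 hp.le, mul_le_mul_of_nonneg_left h3 hp.le]

lemma scal_diag2 (p m f nu w2 g a : ℝ) (hp : 0 < p) (ha : 0 < a) (hmf : 0 < m + f)
    (hw2 : 0 < w2) (haeq : a = (m + f) - (nu + f)) (hw2a : w2 < p * a) :
    2 * (w2 - p * a + p * |m + f| - p * |nu + f| - w2 * g)
      ≤ |p * (m + f) + w2| - (p * |nu + f| + |p * a - w2| + 2 * (w2 * g)) := by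
  have h1 : |p * a - w2| = p * a - w2 := abs_of_pos (by linarith)
  have h2 : |p * (m + f) + w2| = p * (m + f) + w2 :=
    abs_of_pos (by nlinarith)
  have h3 : |m + f| = m + f := abs_of_pos hmf
  have h4 : nu + f ≤ |nu + f| := le_abs_self _
  have h5 : p * a = p * (m + f) - p * (nu + f) := by rw [haeq]; ring
  have h6 := mul_le_mul_of_nonneg_left h4 hp.le
  rw [h1, h2, h3]
  linarith

end Helpers

set_option maxHeartbeats 1600000 in
/-- Theorem 4.4, case (0 < φ₂ < D_{φ₁}). -/
theorem stmt_12 {n : ℕ} (A M₁ N₁ φ φ₁ φ₂ G U : Matrix (Fin n) (Fin n) ℝ)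
    (hA : HplusMatrix A)
    (hsplit : A = (M₁ + φ) - (N₁ + φ))
    (hHsplit : NonsingularMMatrix (cmpMat (M₁ + φ) - matAbs (N₁ + φ)))
    (hφ : φ.IsDiag) (hφ₁ : PosDiag φ₁) (hφ₂ : PosDiag φ₂)
    (hG : ∀ i j, 0 ≤ G i j)
    (hU : PosDiag U)
    (hUsdd : SDD ((cmpMat (M₁ + φ) - matAbs (N₁ + φ)) * U))
    (hφ₂lt : ∀ i, 0 < φ₂ i i ∧ φ₂ i i < (φ₁ * Matrix.diagonal A.diag) i i)
    (hpos : ∀ i, 0 < (((φ₂ - φ₁ * Matrix.diagonal A.diag + cmpMat (φ₁ * M₁ + φ₁ * φ) -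
      matAbs (φ₁ * N₁ + φ₁ * φ) - φ₂ * G) * U) *ᵥ (fun _ => (1 : ℝ))) i) :
    specRad ((cmpMat (φ₁ * M₁) + matAbs (φ₁ * φ) + φ₂)⁻¹ *
        (matAbs (φ₁ * N₁ + φ₁ * φ) + matAbs (φ₁ * A - φ₂) + 2 • (φ₂ * G))) < 1 ∧
      ∀ (q : Fin n → ℝ) (ψ : (Fin n → ℝ) → (Fin n → ℝ)),
        (∀ x y : Fin n → ℝ, ∀ i, |ψ x i - ψ y i| ≤ (G *ᵥ vecAbs (x - y)) i) →
        ∀ zstar : Fin n → ℝ, ICPsol A q ψ zstar →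
          ∀ z : ℕ → Fin n → ℝ,
            (∀ k, z (k + 1) = (φ₁ * M₁ + φ₁ * φ + φ₂)⁻¹ *ᵥ
              ((φ₁ * N₁ + φ₁ * φ) *ᵥ z k +
                vecAbs ((φ₁ * A - φ₂) *ᵥ z k + φ₁ *ᵥ q + φ₂ *ᵥ ψ (z k)) -
                φ₁ *ᵥ q + φ₂ *ᵥ ψ (z k))) →
            Filter.Tendsto z Filter.atTop (nhds zstar) := by
  classical
  obtain ⟨hAcmp, hAdiag⟩ := hA
  have hp : ∀ i, 0 < φ₁ i i := hφ₁.2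
  set u : Fin n → ℝ := fun i => U i i with hu_def
  have hupos : ∀ i, 0 < u i := fun i => hU.2 i
  set Np := φ₁ * N₁ + φ₁ * φ with hNp
  set Bm := φ₁ * M₁ + φ₁ * φ + φ₂ with hBm
  set W := cmpMat (φ₁ * M₁) + matAbs (φ₁ * φ) + φ₂ with hW
  set R := matAbs Np + matAbs (φ₁ * A - φ₂) + 2 • (φ₂ * G) with hR
  set Y := φ₂ - φ₁ * Matrix.diagonal A.diag + cmpMat (φ₁ * M₁ + φ₁ * φ) -
    matAbs Np - φ₂ * G with hY
  have hA2 : A = M₁ - N₁ := by rw [hsplit]; abel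
  have hAij : ∀ i j, A i j = M₁ i j - N₁ i j := fun i j => by rw [hA2]; rfl
  have hw2lt : ∀ i, φ₂ i i < φ₁ i i * A i i := by
    intro i
    have h := (hφ₂lt i).2
    rwa [diag_mul_apply hφ₁.1, Matrix.diagonal_apply_eq] at h
  have hmf : ∀ i, 0 < M₁ i i + φ i i := by
    intro i
    have hd := mmatrix_diag_pos hHsplit i
    have he : (cmpMat (M₁ + φ) - matAbs (N₁ + φ)) i i
        = |M₁ i i + φ i i| - |N₁ i i + φ i i| := by
      simp [cmpMat, matAbs, Matrix.sub_apply, Matrix.add_apply]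
    rw [he] at hd
    have ha : (0:ℝ) < (M₁ i i + φ i i) - (N₁ i i + φ i i) := by
      have h5 := hAdiag i
      rw [hAij i i] at h5
      linarith
    rcases abs_cases (M₁ i i + φ i i) with ⟨h1, h2⟩ | ⟨h1, h2⟩ <;>
      rcases abs_cases (N₁ i i + φ i i) with ⟨h3, h4⟩ | ⟨h3, h4⟩ <;> linarith
  have esmul : ∀ (X : Matrix (Fin n) (Fin n) ℝ) (a b : Fin n), (2 • X) a b = 2 * X a b :=
    fun X a b => by simp
  -- key entry inequality 1 : 2Y ≤ W - R
  have hkey1 : ∀ i j, 2 * Y i j ≤ W i j - R i j := by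
    intro i j
    rcases eq_or_ne i j with rfl | hij
    · simp only [hY, hW, hR, hNp, esmul, Matrix.add_apply, Matrix.sub_apply, cmpMat, matAbs,
        eq_self_iff_true, if_true, diag_mul_apply hφ₁.1, diag_mul_apply hφ₂.1,
        Matrix.diagonal_apply_eq, Matrix.diag_apply, abs_mul, abs_of_pos (hp i)]
      have e1 : |φ₁ i i * M₁ i i + φ₁ i i * φ i i| = φ₁ i i * |M₁ i i + φ i i| := by
        rw [← mul_add, abs_mul, abs_of_pos (hp i)]
      have e2 : |φ₁ i i * N₁ i i + φ₁ i i * φ i i| = φ₁ i i * |N₁ i i + φ i i| := by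
        rw [← mul_add, abs_mul, abs_of_pos (hp i)]
      rw [e1, e2]
      have := scal_diag1 (φ₁ i i) (M₁ i i) (φ i i) (N₁ i i) (φ₂ i i) (G i i) (A i i)
        (hp i) (hAdiag i) (by rw [hAij i i]; ring) (hw2lt i)
      linarith
    · have hφ0 : φ i j = 0 := hφ hij
      have hφ₂0 : φ₂ i j = 0 := hφ₂.1 hij
      simp only [hY, hW, hR, hNp, esmul, Matrix.add_apply, Matrix.sub_apply, cmpMat, matAbs,
        if_neg hij, diag_mul_apply hφ₁.1, diag_mul_apply hφ₂.1,
        Matrix.diagonal_apply_ne _ hij, hφ0, hφ₂0, mul_zero, add_zero, sub_zero, abs_zero,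
        abs_mul, abs_of_pos (hp i)]
      have := scal_off (φ₁ i i) (M₁ i j) (N₁ i j) (A i j) (φ₂ i i * G i j)
        (hp i).le (mul_nonneg (hφ₂.2 i).le (hG i j)) (hAij i j)
      linarith
  -- key entry inequality 2 : 2Y ≤ cmpMat Bm - R
  have hkey2 : ∀ i j, 2 * Y i j ≤ cmpMat Bm i j - R i j := by
    intro i j
    rcases eq_or_ne i j with rfl | hij
    · simp only [hY, hBm, hR, hNp, esmul, Matrix.add_apply, Matrix.sub_apply, cmpMat, matAbs,
        eq_self_iff_true, if_true, diag_mul_apply hφ₁.1, diag_mul_apply hφ₂.1,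
        Matrix.diagonal_apply_eq, Matrix.diag_apply, abs_mul, abs_of_pos (hp i)]
      have e1 : φ₁ i i * M₁ i i + φ₁ i i * φ i i + φ₂ i i
          = φ₁ i i * (M₁ i i + φ i i) + φ₂ i i := by ring
      have e2 : |φ₁ i i * N₁ i i + φ₁ i i * φ i i| = φ₁ i i * |N₁ i i + φ i i| := by
        rw [← mul_add, abs_mul, abs_of_pos (hp i)]
      have e3 : |φ₁ i i * M₁ i i + φ₁ i i * φ i i| = φ₁ i i * |M₁ i i + φ i i| := by
        rw [← mul_add, abs_mul, abs_of_pos (hp i)]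
      rw [e1, e2, e3]
      have := scal_diag2 (φ₁ i i) (M₁ i i) (φ i i) (N₁ i i) (φ₂ i i) (G i i) (A i i)
        (hp i) (hAdiag i) (hmf i) (hφ₂.2 i) (by rw [hAij i i]; ring) (hw2lt i)
      linarith
    · have hφ0 : φ i j = 0 := hφ hij
      have hφ₂0 : φ₂ i j = 0 := hφ₂.1 hij
      simp only [hY, hBm, hR, hNp, esmul, Matrix.add_apply, Matrix.sub_apply, cmpMat, matAbs,
        if_neg hij, diag_mul_apply hφ₁.1, diag_mul_apply hφ₂.1,
        Matrix.diagonal_apply_ne _ hij, hφ0, hφ₂0, mul_zero, add_zero, sub_zero, abs_zero,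
        abs_mul, abs_of_pos (hp i)]
      have := scal_off (φ₁ i i) (M₁ i j) (N₁ i j) (A i j) (φ₂ i i * G i j)
        (hp i).le (mul_nonneg (hφ₂.2 i).le (hG i j)) (hAij i j)
      linarith
  -- R is entrywise nonnegative
  have hR0 : ∀ i j, 0 ≤ R i j := by
    intro i j
    simp only [hR, Matrix.add_apply, matAbs, esmul, diag_mul_apply hφ₂.1]
    have := abs_nonneg (Np i j)
    have := abs_nonneg ((φ₁ * A - φ₂) i j)
    nlinarith [mul_nonneg (hφ₂.2 i).le (hG i j)]
  -- W is a Z-matrix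
  have hWZ : ∀ i j, i ≠ j → W i j ≤ 0 := by
    intro i j hij
    have hφ0 : φ i j = 0 := hφ hij
    have hφ₂0 : φ₂ i j = 0 := hφ₂.1 hij
    simp only [hW, Matrix.add_apply, cmpMat, matAbs, if_neg hij, diag_mul_apply hφ₁.1,
      hφ0, hφ₂0, mul_zero, add_zero, abs_zero]
    have := abs_nonneg (φ₁ i i * M₁ i j)
    linarith
  have hcBZ : ∀ i j, i ≠ j → cmpMat Bm i j ≤ 0 := by
    intro i j hij
    simp only [cmpMat, if_neg hij]
    exact neg_nonpos.2 (abs_nonneg _)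
  -- translate hpos
  have hYu : ∀ i, 0 < (Y *ᵥ u) i := by
    intro i
    have h1 := hpos i
    have h2 : (U *ᵥ (fun _ => (1:ℝ))) = u := by
      funext j
      rw [diag_mulVec_apply hU.1, mul_one]
    rw [← Matrix.mulVec_mulVec, h2] at h1
    exact h1
  -- vector inequalities
  have hWRu : ∀ i, 2 * (Y *ᵥ u) i ≤ (W *ᵥ u) i - (R *ᵥ u) i :=
    twoY_le (fun j => (hupos j).le) hkey1
  have hcBRu : ∀ i, 2 * (Y *ᵥ u) i ≤ (cmpMat Bm *ᵥ u) i - (R *ᵥ u) i :=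
    twoY_le (fun j => (hupos j).le) hkey2
  have hRu0 : ∀ i, 0 ≤ (R *ᵥ u) i := fun i => mulVec_nonneg hR0 (fun j => (hupos j).le) i
  have hWu : ∀ i, 0 < (W *ᵥ u) i := by
    intro i; have := hWRu i; have := hYu i; have := hRu0 i; linarith
  have hcBu : ∀ i, 0 < (cmpMat Bm *ᵥ u) i := by
    intro i; have := hcBRu i; have := hYu i; have := hRu0 i; linarith
  have hdetW : IsUnit W.det := zmat_det_isUnit hWZ hupos hWu
  have hWinv : ∀ i j, 0 ≤ W⁻¹ i j := zmat_inv_nonneg hWZ hupos hWu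
  constructor
  · -- spectral radius part
    have hLnn : ∀ i j, 0 ≤ (W⁻¹ * R) i j := by
      intro i j
      rw [Matrix.mul_apply]
      exact Finset.sum_nonneg fun k _ => mul_nonneg (hWinv i k) (hR0 k j)
    have hLu : ∀ i, ((W⁻¹ * R) *ᵥ u) i < u i := by
      intro i
      have h2 : ∀ j, 0 < (W *ᵥ u - R *ᵥ u) j := by
        intro j
        have := hWRu j; have := hYu j
        simp only [Pi.sub_apply]
        linarith
      have h4 := zmat_inv_mulVec_pos hWZ hupos hWu h2 i
      have h3 : W⁻¹ *ᵥ (W *ᵥ u - R *ᵥ u) = u - W⁻¹ *ᵥ (R *ᵥ u) := by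
        rw [Matrix.mulVec_sub, Matrix.mulVec_mulVec, Matrix.nonsing_inv_mul _ hdetW,
          Matrix.one_mulVec]
      rw [h3] at h4
      have h5 : (u - W⁻¹ *ᵥ (R *ᵥ u)) i = u i - (W⁻¹ *ᵥ (R *ᵥ u)) i := rfl
      rw [h5] at h4
      rw [← Matrix.mulVec_mulVec]
      linarith
    exact specRad_lt_one hLnn hupos hLu
  · -- convergence part
    intro q ψ hψ zstar hzs z hiter
    obtain ⟨hr0, hs0, hrs⟩ := hzs
    have hdetB : IsUnit Bm.det := hmat_det_isUnit hupos hcBu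
    have hinvcB : ∀ i j, 0 ≤ (cmpMat Bm)⁻¹ i j := zmat_inv_nonneg hcBZ hupos hcBu
    have hdetcB : IsUnit (cmpMat Bm).det := zmat_det_isUnit hcBZ hupos hcBu
    -- complementarity holds componentwise
    have hrs' : ∀ i, (A *ᵥ zstar + q) i * (zstar - ψ zstar) i = 0 := by
      rw [dotProduct] at hrs
      intro i
      exact (Finset.sum_eq_zero_iff_of_nonneg
        (fun j _ => mul_nonneg (hr0 j) (hs0 j))).1 hrs i (mem_univ i)
    -- value of the modulus term at the solution
    have hφ₁Av : ∀ (x : Fin n → ℝ) i, ((φ₁ * A) *ᵥ x) i = φ₁ i i * (A *ᵥ x) i := by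
      intro x i
      rw [← Matrix.mulVec_mulVec, diag_mulVec_apply hφ₁.1]
    have hα : ∀ i, ((φ₁ * A - φ₂) *ᵥ zstar + φ₁ *ᵥ q + φ₂ *ᵥ ψ zstar) i
        = φ₁ i i * (A *ᵥ zstar + q) i - φ₂ i i * (zstar - ψ zstar) i := by
      intro i
      simp only [Pi.add_apply, Pi.sub_apply, Matrix.sub_mulVec]
      rw [hφ₁Av zstar i, diag_mulVec_apply hφ₂.1, diag_mulVec_apply hφ₁.1,
        diag_mulVec_apply hφ₂.1]
      ring
    have habs : ∀ i, |((φ₁ * A - φ₂) *ᵥ zstar + φ₁ *ᵥ q + φ₂ *ᵥ ψ zstar) i|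
        = φ₁ i i * (A *ᵥ zstar + q) i + φ₂ i i * (zstar - ψ zstar) i := by
      intro i
      rw [hα i]
      rcases mul_eq_zero.1 (hrs' i) with h | h
      · rw [h, mul_zero, zero_sub, abs_neg,
          abs_of_nonneg (mul_nonneg (hφ₂.2 i).le (hs0 i))]
        ring
      · rw [h, mul_zero, sub_zero,
          abs_of_nonneg (mul_nonneg (hp i).le (hr0 i))]
        ring
    have habs2 : ∀ i, |((φ₁ * A - φ₂) *ᵥ zstar) i + (φ₁ *ᵥ q) i + (φ₂ *ᵥ ψ zstar) i|
        = φ₁ i i * ((A *ᵥ zstar) i + q i) + φ₂ i i * (zstar i - ψ zstar i) := by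
      intro i
      have h := habs i
      simpa only [Pi.add_apply, Pi.sub_apply] using h
    -- fixed point property
    have hBm2 : Bm = Np + φ₁ * A + φ₂ := by
      rw [hBm, hNp, hA2, Matrix.mul_sub]; abel
    have hfix : Bm *ᵥ zstar = Np *ᵥ zstar +
        vecAbs ((φ₁ * A - φ₂) *ᵥ zstar + φ₁ *ᵥ q + φ₂ *ᵥ ψ zstar) -
        φ₁ *ᵥ q + φ₂ *ᵥ ψ zstar := by
      funext i
      simp only [Pi.add_apply, Pi.sub_apply, vecAbs_apply]
      rw [habs2 i, hBm2, Matrix.add_mulVec, Matrix.add_mulVec]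
      simp only [Pi.add_apply]
      rw [hφ₁Av zstar i, diag_mulVec_apply hφ₂.1, diag_mulVec_apply hφ₁.1,
        diag_mulVec_apply hφ₂.1]
      ring
    -- error recursion
    have herr : ∀ k, Bm *ᵥ (z (k+1) - zstar) =
        (Np *ᵥ z k + vecAbs ((φ₁ * A - φ₂) *ᵥ z k + φ₁ *ᵥ q + φ₂ *ᵥ ψ (z k)) -
          φ₁ *ᵥ q + φ₂ *ᵥ ψ (z k)) -
        (Np *ᵥ zstar + vecAbs ((φ₁ * A - φ₂) *ᵥ zstar + φ₁ *ᵥ q + φ₂ *ᵥ ψ zstar) -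
          φ₁ *ᵥ q + φ₂ *ᵥ ψ zstar) := by
      intro k
      rw [Matrix.mulVec_sub, ← hfix, hiter k, Matrix.mulVec_mulVec,
        Matrix.mul_nonsing_inv _ hdetB, Matrix.one_mulVec]
    -- componentwise bound on the difference of the iteration maps
    have hdiffb : ∀ k i,
        |(Bm *ᵥ (z (k+1) - zstar)) i| ≤ (R *ᵥ vecAbs (z k - zstar)) i := by
      intro k i
      rw [herr k]
      have e1 : ((Np *ᵥ z k + vecAbs ((φ₁ * A - φ₂) *ᵥ z k + φ₁ *ᵥ q + φ₂ *ᵥ ψ (z k)) -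
          φ₁ *ᵥ q + φ₂ *ᵥ ψ (z k)) -
        (Np *ᵥ zstar + vecAbs ((φ₁ * A - φ₂) *ᵥ zstar + φ₁ *ᵥ q + φ₂ *ᵥ ψ zstar) -
          φ₁ *ᵥ q + φ₂ *ᵥ ψ zstar)) i
        = (Np *ᵥ (z k - zstar)) i
          + (vecAbs ((φ₁ * A - φ₂) *ᵥ z k + φ₁ *ᵥ q + φ₂ *ᵥ ψ (z k)) i -
             vecAbs ((φ₁ * A - φ₂) *ᵥ zstar + φ₁ *ᵥ q + φ₂ *ᵥ ψ zstar) i)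
          + φ₂ i i * (ψ (z k) i - ψ zstar i) := by
        simp only [Pi.add_apply, Pi.sub_apply, Matrix.mulVec_sub,
          diag_mulVec_apply hφ₂.1]
        ring
      rw [e1]
      have hb1 : |(Np *ᵥ (z k - zstar)) i| ≤ (matAbs Np *ᵥ vecAbs (z k - zstar)) i :=
        abs_mulVec_le _ i
      have hb3 : |φ₂ i i * (ψ (z k) i - ψ zstar i)| ≤ ((φ₂ * G) *ᵥ vecAbs (z k - zstar)) i := by
        rw [abs_mul, abs_of_pos (hφ₂.2 i), ← Matrix.mulVec_mulVec,
          diag_mulVec_apply hφ₂.1]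
        exact mul_le_mul_of_nonneg_left (hψ (z k) zstar i) (hφ₂.2 i).le
      have hb2 : |vecAbs ((φ₁ * A - φ₂) *ᵥ z k + φ₁ *ᵥ q + φ₂ *ᵥ ψ (z k)) i -
             vecAbs ((φ₁ * A - φ₂) *ᵥ zstar + φ₁ *ᵥ q + φ₂ *ᵥ ψ zstar) i|
          ≤ (matAbs (φ₁ * A - φ₂) *ᵥ vecAbs (z k - zstar)) i
            + ((φ₂ * G) *ᵥ vecAbs (z k - zstar)) i := by
        have h6 : ((φ₁ * A - φ₂) *ᵥ z k + φ₁ *ᵥ q + φ₂ *ᵥ ψ (z k)) i -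
            ((φ₁ * A - φ₂) *ᵥ zstar + φ₁ *ᵥ q + φ₂ *ᵥ ψ zstar) i
            = ((φ₁ * A - φ₂) *ᵥ (z k - zstar)) i + φ₂ i i * (ψ (z k) i - ψ zstar i) := by
          simp only [Pi.add_apply, Pi.sub_apply, Matrix.mulVec_sub,
            diag_mulVec_apply hφ₂.1]
          ring
        rw [vecAbs_apply, vecAbs_apply]
        refine le_trans (abs_abs_sub_abs_le_abs_sub _ _) ?_
        rw [h6]
        refine le_trans (abs_add_le _ _) ?_
        have h8 := abs_mulVec_le (M := φ₁ * A - φ₂) (z k - zstar) i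
        linarith [hb3]
      have eR : (R *ᵥ vecAbs (z k - zstar)) i
          = (matAbs Np *ᵥ vecAbs (z k - zstar)) i
            + (matAbs (φ₁ * A - φ₂) *ᵥ vecAbs (z k - zstar)) i
            + 2 * (((φ₂ * G) *ᵥ vecAbs (z k - zstar)) i) := by
        rw [hR]
        simp only [Matrix.add_mulVec, Pi.add_apply]
        congr 1
        have : (2 • (φ₂ * G)) *ᵥ vecAbs (z k - zstar) =
            (2:ℕ) • ((φ₂ * G) *ᵥ vecAbs (z k - zstar)) := by
          rw [← Matrix.smul_mulVec]
        rw [this]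
        simp
      rw [eR]
      refine le_trans (abs_add_le _ _) ?_
      refine le_trans (add_le_add_left (abs_add_le _ _) _) ?_
      linarith [hb1, hb2, hb3]
    -- componentwise contraction step
    have hstep : ∀ k i, (cmpMat Bm *ᵥ vecAbs (z (k+1) - zstar)) i
        ≤ (R *ᵥ vecAbs (z k - zstar)) i := fun k i =>
      le_trans (cmpMat_mulVec_abs_le _ i) (hdiffb k i)
    have hiterb : ∀ k i, vecAbs (z (k+1) - zstar) i
        ≤ ((cmpMat Bm)⁻¹ *ᵥ (R *ᵥ vecAbs (z k - zstar))) i := by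
      intro k i
      have h1 : (cmpMat Bm)⁻¹ *ᵥ (cmpMat Bm *ᵥ vecAbs (z (k+1) - zstar))
          = vecAbs (z (k+1) - zstar) := by
        rw [Matrix.mulVec_mulVec, Matrix.nonsing_inv_mul _ hdetcB, Matrix.one_mulVec]
      calc vecAbs (z (k+1) - zstar) i
          = ((cmpMat Bm)⁻¹ *ᵥ (cmpMat Bm *ᵥ vecAbs (z (k+1) - zstar))) i := by rw [h1]
        _ ≤ _ := mulVec_mono hinvcB (hstep k) i
    rcases Nat.eq_zero_or_pos n with hn0 | hn
    · have hz0 : z = fun _ => zstar := by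
        subst hn0
        funext k i
        exact Fin.elim0 i
      rw [hz0]
      exact tendsto_const_nhds
    have hne : (univ : Finset (Fin n)).Nonempty := ⟨⟨0, hn⟩, mem_univ _⟩
    set v := (cmpMat Bm)⁻¹ *ᵥ (R *ᵥ u) with hv
    have hvnn : ∀ i, 0 ≤ v i := fun i => mulVec_nonneg hinvcB hRu0 i
    have hvlt : ∀ i, v i < u i := by
      intro i
      have h2 : ∀ j, 0 < (cmpMat Bm *ᵥ u - R *ᵥ u) j := by
        intro j
        have := hcBRu j; have := hYu j
        simp only [Pi.sub_apply]
        linarith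
      have h4 := zmat_inv_mulVec_pos hcBZ hupos hcBu h2 i
      have h3 : (cmpMat Bm)⁻¹ *ᵥ (cmpMat Bm *ᵥ u - R *ᵥ u) = u - v := by
        rw [Matrix.mulVec_sub, Matrix.mulVec_mulVec, Matrix.nonsing_inv_mul _ hdetcB,
          Matrix.one_mulVec, hv]
      rw [h3] at h4
      have h5 : (u - v) i = u i - v i := rfl
      rw [h5] at h4
      linarith
    set c := univ.sup' hne (fun i => v i / u i) with hc
    have hc0 : 0 ≤ c :=
      le_trans (div_nonneg (hvnn ⟨0, hn⟩) (hupos _).le)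
        (Finset.le_sup' (f := fun i => v i / u i) (mem_univ _))
    have hc1 : c < 1 := by
      rw [hc, Finset.sup'_lt_iff]
      intro i _
      rw [div_lt_one (hupos i)]
      exact hvlt i
    have hvc : ∀ i, v i ≤ c * u i := by
      intro i
      have h6 := Finset.le_sup' (f := fun i => v i / u i) (b := i) (mem_univ i)
      rw [div_le_iff₀ (hupos i)] at h6
      linarith
    set M0 := univ.sup' hne (fun i => |z 0 i - zstar i| / u i) with hM
    have hM0nn : 0 ≤ M0 :=
      le_trans (div_nonneg (abs_nonneg _) (hupos ⟨0, hn⟩).le)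
        (Finset.le_sup' (f := fun i => |z 0 i - zstar i| / u i) (mem_univ _))
    have hM0 : ∀ i, |z 0 i - zstar i| ≤ M0 * u i := by
      intro i
      have h6 := Finset.le_sup' (f := fun i => |z 0 i - zstar i| / u i) (b := i) (mem_univ i)
      rw [div_le_iff₀ (hupos i)] at h6
      linarith
    have hind : ∀ k i, |z k i - zstar i| ≤ c ^ k * M0 * u i := by
      intro k
      induction k with
      | zero => intro i; simpa using hM0 i
      | succ k ih =>
        intro i
        have step1 : vecAbs (z (k+1) - zstar) i
            ≤ ((cmpMat Bm)⁻¹ *ᵥ (R *ᵥ ((c ^ k * M0) • u))) i := by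
          refine le_trans (hiterb k i) ?_
          refine mulVec_mono hinvcB (fun j => mulVec_mono hR0 (fun l => ?_) j) i
          have h7 := ih l
          rw [vecAbs_apply]
          have h8 : (z k - zstar) l = z k l - zstar l := rfl
          have h9 : ((c ^ k * M0) • u) l = c ^ k * M0 * u l := rfl
          rw [h8, h9]
          exact h7
        have step2 : ((cmpMat Bm)⁻¹ *ᵥ (R *ᵥ ((c ^ k * M0) • u))) i
            = (c ^ k * M0) * v i := by
          rw [Matrix.mulVec_smul, Matrix.mulVec_smul, hv]
          rfl
        have step3 : (c ^ k * M0) * v i ≤ (c ^ k * M0) * (c * u i) :=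
          mul_le_mul_of_nonneg_left (hvc i) (by positivity)
        have h10 : vecAbs (z (k+1) - zstar) i = |z (k+1) i - zstar i| := rfl
        rw [h10] at step1
        calc |z (k+1) i - zstar i| ≤ (c ^ k * M0) * (c * u i) := by
              rw [← step2] at step3
              exact le_trans step1 step3
          _ = c ^ (k+1) * M0 * u i := by ring
    rw [tendsto_pi_nhds]
    intro i
    rw [← tendsto_sub_nhds_zero_iff]
    refine squeeze_zero_norm (a := fun k => c ^ k * (M0 * u i)) (fun k => ?_) ?_
    · rw [Real.norm_eq_abs]
      calc |z k i - zstar i| ≤ c ^ k * M0 * u i := hind k i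
        _ = c ^ k * (M0 * u i) := by ring
    · have h11 := (tendsto_pow_atTop_nhds_zero_of_lt_one hc0 hc1).mul_const (M0 * u i)
      simpa using h11
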